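/- Precision maximality of the optimal tree: for every valid configuration c = (z, σ, t) and every reachable tree t' ∈ D(c), p(t') ≤ p(t*(c)), i.e., |t' ∩ t_G| / |t'| ≤ |t*(c) ∩ t_G| / |t*(c)|. (Part of the proof of Theorem 1.) -/

import Mathlib

/-!
Formalization of the span-based Structure/Label transition parsing system of
Cross & Huang (2016), "Span-Based Constituency Parsing with a Structure-Label
System and Provably Optimal Dynamic Oracles".

A configuration is `(z, σ, t)` where `z` is the step number, `σ` the stack of
span boundaries and `t` the set of brackets built so far.  A bracket is a
triple `(X, i, j)` with `X` a nonterminal label and `i < j ≤ n` a span.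
-/

namespace SpanParser

structure Config (N : Type*) where
  z : ℕ
  σ : List ℕ
  t : Finset (N × ℕ × ℕ)

variable {N : Type*}

/-- The span of a bracket. -/
def span (b : N × ℕ × ℕ) : ℕ × ℕ := b.2

/-- Top (rightmost) boundary of the stack. -/
def topJ (σ : List ℕ) : ℕ := σ.getLastD 0

/-- Second-to-top boundary of the stack. -/
def topI (σ : List ℕ) : ℕ := σ.dropLast.getLastD 0

/-- Parser actions: shift, combine, label-`X`, and nolabel. -/
inductive Action (N : Type*) where
  | sh : Action N
  | comb : Action N
  | label : N → Action N
  | nolabel : Action N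

variable [DecidableEq N]

/-- Applicability of an action at a configuration (for sentence length `n`). -/
def App (n : ℕ) (c : Config N) : Action N → Prop
  | .sh      => Even c.z ∧ c.σ ≠ [] ∧ topJ c.σ < n
  | .comb    => Even c.z ∧ 3 ≤ c.σ.length
  | .label _ => Odd c.z ∧ 2 ≤ c.σ.length
  | .nolabel => Odd c.z ∧ 2 ≤ c.σ.length ∧ c.z < 4 * n - 1

/-- The result `τ(c)` of applying action `τ` to configuration `c`. -/
def doAct (c : Config N) : Action N → Config N
  | .sh      => ⟨c.z + 1, c.σ ++ [topJ c.σ + 1], c.t⟩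
  | .comb    => ⟨c.z + 1, c.σ.dropLast.dropLast ++ [topJ c.σ], c.t⟩
  | .label X => ⟨c.z + 1, c.σ, insert (X, topI c.σ, topJ c.σ) c.t⟩
  | .nolabel => ⟨c.z + 1, c.σ, c.t⟩

/-- The initial configuration `(0, [0], ∅)`. -/
def initial (N : Type*) : Config N := ⟨0, [0], ∅⟩

/-- One transition step `c ⊢ c'`. -/
def Step (n : ℕ) (c c' : Config N) : Prop := ∃ a, App n c a ∧ c' = doAct c a

/-- `⊢*`: reflexive-transitive closure of the transition relation. -/
def Reaches (n : ℕ) : Config N → Config N → Prop := Relation.ReflTransGen (Step n)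

/-- A configuration is valid if it is reachable from the initial configuration. -/
def Valid (n : ℕ) (c : Config N) : Prop := Reaches n (initial N) c

/-- A final configuration: `σ = [0, n]` and `z = 4n - 2`. -/
def Final (n : ℕ) (c : Config N) : Prop := c.σ = [0, n] ∧ c.z = 4 * n - 2

/-- `D(c)`: the set of trees of final configurations reachable from `c`. -/
def Dset (n : ℕ) (c : Config N) : Set (Finset (N × ℕ × ℕ)) :=
  {t' | ∃ c', Reaches n c c' ∧ Final n c' ∧ c'.t = t'}

/-- `(i,j) ⪯ (p,q)`: span `(i,j)` is encompassed by `(p,q)`, i.e. `p ≤ i < j ≤ q`. -/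
def Enc (s₁ s₂ : ℕ × ℕ) : Prop := s₂.1 ≤ s₁.1 ∧ s₁.1 < s₁.2 ∧ s₁.2 ≤ s₂.2

/-- `(i,j) ≺ (p,q)`: strict encompassment. -/
def SEnc (s₁ s₂ : ℕ × ℕ) : Prop := Enc s₁ s₂ ∧ s₁ ≠ s₂

/-- `tG` is a gold tree for sentence length `n`: valid spans, pairwise-distinct
spans, pairwise non-crossing spans, and exactly one bracket with span `(0, n)`
(uniqueness follows from distinctness of spans). -/
structure IsGold (n : ℕ) (tG : Finset (N × ℕ × ℕ)) : Prop where
  validSpans : ∀ b ∈ tG, (span b).1 < (span b).2 ∧ (span b).2 ≤ n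
  distinctSpans : ∀ b₁ ∈ tG, ∀ b₂ ∈ tG, span b₁ = span b₂ → b₁ = b₂
  noncrossing : ∀ b₁ ∈ tG, ∀ b₂ ∈ tG,
    Enc (span b₁) (span b₂) ∨ Enc (span b₂) (span b₁) ∨
    (span b₁).2 ≤ (span b₂).1 ∨ (span b₂).2 ≤ (span b₁).1
  root : ∃ X, (X, 0, n) ∈ tG

open Classical in
/-- `left(c)`: gold brackets (strictly, at even steps) encompassing the top
span whose left boundary occurs on the stack. -/
noncomputable def leftSet (tG : Finset (N × ℕ × ℕ)) (c : Config N) :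
    Finset (N × ℕ × ℕ) :=
  tG.filter fun b =>
    (if Even c.z then SEnc (topI c.σ, topJ c.σ) (span b)
     else Enc (topI c.σ, topJ c.σ) (span b)) ∧ (span b).1 ∈ c.σ

open Classical in
/-- `right(c)`: gold brackets entirely on the queue. -/
noncomputable def rightSet (tG : Finset (N × ℕ × ℕ)) (c : Config N) :
    Finset (N × ℕ × ℕ) :=
  tG.filter fun b => topJ c.σ ≤ (span b).1

open Classical in
/-- `reach(c)`: the reachable gold brackets (all of `t_G` at the initial
configuration, whose stack has fewer than two boundaries). -/
noncomputable def reach (tG : Finset (N × ℕ × ℕ)) (c : Config N) :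
    Finset (N × ℕ × ℕ) :=
  if c.σ.length < 2 then tG else leftSet tG c ∪ rightSet tG c

/-- The optimal tree `t*(c) = t ∪ reach(c)`. -/
noncomputable def tstar (tG : Finset (N × ℕ × ℕ)) (c : Config N) :
    Finset (N × ℕ × ℕ) :=
  c.t ∪ reach tG c

/-- `b = next(c)`: the `≺`-minimal element of `left(c)`. -/
def IsNext (tG : Finset (N × ℕ × ℕ)) (c : Config N) (b : N × ℕ × ℕ) : Prop :=
  b ∈ leftSet tG c ∧ ∀ b' ∈ leftSet tG c, Enc (span b) (span b')

/-- The dynamic-oracle policy `dyna(c)` as a predicate on actions. -/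
def Dyna (tG : Finset (N × ℕ × ℕ)) (c : Config N) (a : Action N) : Prop :=
  if c.σ.length < 2 then a = Action.sh
  else if Even c.z then
    ∃ b, IsNext tG c b ∧
      (((span b).1 = topI c.σ ∧ topJ c.σ < (span b).2 ∧ a = Action.sh) ∨
       ((span b).1 < topI c.σ ∧ (span b).2 = topJ c.σ ∧ a = Action.comb) ∨
       ((span b).1 < topI c.σ ∧ topJ c.σ < (span b).2 ∧
          (a = Action.sh ∨ a = Action.comb)))
  else
    (∃ X, (X, topI c.σ, topJ c.σ) ∈ tG ∧ a = Action.label X) ∨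
    ((∀ X, (X, topI c.σ, topJ c.σ) ∉ tG) ∧ a = Action.nolabel)

/-- `F1` of a predicted bracket set `t'` against the gold tree `tG`
(`0` when `t' ∩ tG = ∅`). -/
noncomputable def f1 (tG t' : Finset (N × ℕ × ℕ)) : ℝ :=
  if t' ∩ tG = ∅ then 0
  else
    (2 * (((t' ∩ tG).card : ℝ) / (tG.card : ℝ)) * (((t' ∩ tG).card : ℝ) / (t'.card : ℝ))) /
      ((((t' ∩ tG).card : ℝ) / (tG.card : ℝ)) + (((t' ∩ tG).card : ℝ) / (t'.card : ℝ)))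

/-- `F1(c)`: the best `F1` among trees reachable from `c`. -/
noncomputable def configF1 (n : ℕ) (tG : Finset (N × ℕ × ℕ)) (c : Config N) : ℝ :=
  sSup (f1 tG '' Dset n c)

/-- A run of (applicable) actions from one configuration to another. -/
inductive Run (n : ℕ) : Config N → List (Action N) → Config N → Prop
  | refl (c : Config N) : Run n c [] c
  | step {c c' : Config N} {as : List (Action N)} (a : Action N)
      (happ : App n c a) (h : Run n (doAct c a) as c') : Run n c (a :: as) c'

/-- A run all of whose actions follow the dynamic oracle. -/
inductive DynaRun (n : ℕ) (tG : Finset (N × ℕ × ℕ)) : Config N → Config N → Prop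
  | refl (c : Config N) : DynaRun n tG c c
  | step {c c' : Config N} (a : Action N) (happ : App n c a) (hdyna : Dyna tG c a)
      (h : DynaRun n tG (doAct c a) c') : DynaRun n tG c c'

def isSh : Action N → Bool
  | .sh => true
  | _ => false

def isComb : Action N → Bool
  | .comb => true
  | _ => false

/-- Label-step actions: `label-X` or `nolabel`. -/
def isLabelStep : Action N → Bool
  | .label _ => true
  | .nolabel => true
  | _ => false

section Aux

set_option linter.unusedSectionVars false

variable {n : ℕ} {tG : Finset (N × ℕ × ℕ)}

/-- Stack invariant of valid configurations. -/
def Inv (c : Config N) : Prop := c.σ ≠ [] ∧ c.σ.Pairwise (· < ·)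

lemma rep1 (l : List ℕ) (h : l ≠ []) : ∃ m j, l = m ++ [j] :=
  ⟨l.dropLast, l.getLast h, (List.dropLast_append_getLast h).symm⟩

lemma rep2 (l : List ℕ) (h : 2 ≤ l.length) : ∃ m i j, l = m ++ [i, j] := by
  obtain ⟨m, j, rfl⟩ := rep1 l (by rintro rfl; simp at h)
  obtain ⟨m', i, rfl⟩ := rep1 m (by rintro rfl; simp at h)
  exact ⟨m', i, j, by simp⟩

lemma rep3 (l : List ℕ) (h : 3 ≤ l.length) : ∃ m h i j, l = m ++ [h, i, j] := by
  obtain ⟨m, i, j, rfl⟩ := rep2 l (by omega)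
  obtain ⟨m', x, rfl⟩ := rep1 m (by
    rintro rfl
    simp only [List.nil_append, List.length_cons, List.length_nil] at h
    omega)
  exact ⟨m', x, i, j, by simp⟩

lemma topJ_concat (m : List ℕ) (j : ℕ) : topJ (m ++ [j]) = j := by simp [topJ]

lemma topJ_rep2 (m : List ℕ) (i j : ℕ) : topJ (m ++ [i, j]) = j := by
  rw [show m ++ [i, j] = (m ++ [i]) ++ [j] by simp]; exact topJ_concat _ _

lemma topI_rep2 (m : List ℕ) (i j : ℕ) : topI (m ++ [i, j]) = i := by
  rw [topI, show m ++ [i, j] = (m ++ [i]) ++ [j] by simp]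
  simp [topJ]

lemma topJ_rep3 (m : List ℕ) (h i j : ℕ) : topJ (m ++ [h, i, j]) = j := by
  rw [show m ++ [h, i, j] = (m ++ [h]) ++ [i, j] by simp]; exact topJ_rep2 _ _ _

lemma topI_rep3 (m : List ℕ) (h i j : ℕ) : topI (m ++ [h, i, j]) = i := by
  rw [show m ++ [h, i, j] = (m ++ [h]) ++ [i, j] by simp]; exact topI_rep2 _ _ _

lemma dropLast2_rep3 (m : List ℕ) (h i j : ℕ) :
    ((m ++ [h, i, j]).dropLast).dropLast = m ++ [h] := by
  rw [show m ++ [h, i, j] = ((m ++ [h]) ++ [i]) ++ [j] by simp]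
  simp

lemma len_rep2 (m : List ℕ) (i j : ℕ) : (m ++ [i, j]).length = m.length + 2 := by
  simp

lemma sorted_rep2 {m : List ℕ} {i j : ℕ} (hs : (m ++ [i, j]).Pairwise (· < ·)) :
    i < j ∧ ∀ a ∈ m, a < i := by
  rw [List.pairwise_append] at hs
  obtain ⟨_, h2, h3⟩ := hs
  refine ⟨by simpa using List.rel_of_pairwise_cons h2 (by simp), fun a ha => h3 a ha i (by simp)⟩

lemma sorted_rep3 {m : List ℕ} {h i j : ℕ} (hs : (m ++ [h, i, j]).Pairwise (· < ·)) :
    h < i ∧ i < j ∧ ∀ a ∈ m, a < h := by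
  rw [List.pairwise_append] at hs
  obtain ⟨_, h2, h3⟩ := hs
  refine ⟨by simpa using List.rel_of_pairwise_cons h2 (by simp), ?_, fun a ha => h3 a ha h (by simp)⟩
  have hsub : List.Sublist [i, j] [h, i, j] := List.sublist_cons_self h [i, j]
  have := List.Pairwise.sublist hsub h2
  simpa using List.rel_of_pairwise_cons this (by simp)

lemma mem_leftSet {c : Config N} {b : N × ℕ × ℕ} :
    b ∈ leftSet tG c ↔ b ∈ tG ∧
      (if Even c.z then SEnc (topI c.σ, topJ c.σ) (span b)
       else Enc (topI c.σ, topJ c.σ) (span b)) ∧ (span b).1 ∈ c.σ := by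
  classical
  rw [leftSet, Finset.mem_filter]

lemma mem_rightSet {c : Config N} {b : N × ℕ × ℕ} :
    b ∈ rightSet tG c ↔ b ∈ tG ∧ topJ c.σ ≤ (span b).1 := by
  classical
  rw [rightSet, Finset.mem_filter]

lemma reach_subset_tG (tG : Finset (N × ℕ × ℕ)) (c : Config N) : reach tG c ⊆ tG := by
  intro b hb
  rw [reach] at hb
  split at hb
  · exact hb
  · rcases Finset.mem_union.1 hb with h | h
    · exact (mem_leftSet.1 h).1
    · exact (mem_rightSet.1 h).1

lemma reach_eq_of_len {c : Config N} (h : 2 ≤ c.σ.length) :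
    reach tG c = leftSet tG c ∪ rightSet tG c := by
  rw [reach, if_neg (by omega)]

/-- The gold part of the optimal tree. -/
noncomputable def goldPart (tG : Finset (N × ℕ × ℕ)) (c : Config N) : Finset (N × ℕ × ℕ) :=
  c.t ∩ tG ∪ reach tG c

lemma inv_step {c : Config N} (hc : Inv c) {a : Action N} (ha : App n c a) :
    Inv (doAct c a) := by
  obtain ⟨hne, hs⟩ := hc
  cases a with
  | sh =>
    refine ⟨by simp [doAct], ?_⟩
    obtain ⟨m, j, hm⟩ := rep1 c.σ hne
    simp only [doAct]
    rw [hm, topJ_concat, show (m ++ [j]) ++ [j + 1] = m ++ [j, j + 1] by simp]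
    rw [hm] at hs
    rw [List.pairwise_append] at hs ⊢
    obtain ⟨h1, _, h3⟩ := hs
    refine ⟨h1, by simp, fun a ha b hb => ?_⟩
    have := h3 a ha j (by simp)
    simp only [List.mem_cons, List.mem_singleton, List.not_mem_nil, or_false] at hb
    rcases hb with rfl | rfl <;> omega
  | comb =>
    obtain ⟨hz, hlen⟩ := ha
    obtain ⟨m, x, i, j, hm⟩ := rep3 c.σ hlen
    refine ⟨by simp [doAct], ?_⟩
    simp only [doAct]
    rw [hm, dropLast2_rep3, topJ_rep3, show (m ++ [x]) ++ [j] = m ++ [x, j] by simp]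
    rw [hm] at hs
    have hsub : List.Sublist (m ++ [x, j]) (m ++ [x, i, j]) :=
      List.Sublist.append (List.Sublist.refl m)
        (List.Sublist.cons₂ _ (List.sublist_cons_self i [j]))
    exact hs.sublist hsub
  | label X => exact ⟨hne, hs⟩
  | nolabel => exact ⟨hne, hs⟩

lemma inv_reaches {c c' : Config N} (h : Reaches n c c') (hc : Inv c) : Inv c' := by
  induction h with
  | refl => exact hc
  | tail _ hstep ih =>
    obtain ⟨a, ha, rfl⟩ := hstep
    exact inv_step ih ha

lemma inv_valid {c : Config N} (hc : Valid n c) : Inv c :=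
  inv_reaches hc ⟨by simp [initial], by simp [initial]⟩

lemma t_mono_step (c : Config N) (a : Action N) : c.t ⊆ (doAct c a).t := by
  cases a <;> simp [doAct, Finset.subset_insert]

lemma t_mono {c c' : Config N} (h : Reaches n c c') : c.t ⊆ c'.t := by
  induction h with
  | refl => exact Finset.Subset.refl _
  | tail _ hstep ih =>
    obtain ⟨a, ha, rfl⟩ := hstep
    exact ih.trans (t_mono_step _ a)

/-- Key monotonicity: one step can only shrink the gold part. -/
lemma goldPart_step {c : Config N} (hc : Inv c) {a : Action N} (ha : App n c a) :
    goldPart tG (doAct c a) ⊆ goldPart tG c := by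
  obtain ⟨hne, hs⟩ := hc
  intro b hb
  rcases Finset.mem_union.1 hb with hb | hb
  case inl =>
    -- b ∈ (doAct c a).t ∩ tG
    have hbG : b ∈ tG := (Finset.mem_inter.1 hb).2
    cases a with
    | label X =>
      obtain ⟨hz, hlen⟩ := ha
      rcases Finset.mem_insert.1 (by simpa [doAct] using (Finset.mem_inter.1 hb).1)
        with rfl | hbt
      · -- the freshly labeled bracket is gold, hence in left(c)
        obtain ⟨m, i, j, hm⟩ := rep2 c.σ hlen
        have hIc : topI c.σ = i := by rw [hm, topI_rep2]
        have hJc : topJ c.σ = j := by rw [hm, topJ_rep2]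
        have hij : i < j := (sorted_rep2 (hm ▸ hs)).1
        refine Finset.mem_union_right _ ?_
        rw [reach_eq_of_len (by rw [hm, len_rep2]; omega)]
        refine Finset.mem_union_left _ (mem_leftSet.2 ⟨hbG, ?_, ?_⟩)
        · rw [if_neg (by simpa using hz), hIc, hJc]
          exact ⟨le_refl i, hij, le_refl j⟩
        · show topI c.σ ∈ c.σ
          rw [hIc, hm]; simp
      · exact Finset.mem_union_left _ (Finset.mem_inter.2 ⟨hbt, hbG⟩)
    | sh => exact Finset.mem_union_left _ (by simpa [doAct] using hb)
    | comb => exact Finset.mem_union_left _ (by simpa [doAct] using hb)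
    | nolabel => exact Finset.mem_union_left _ (by simpa [doAct] using hb)
  case inr =>
    -- b ∈ reach tG (doAct c a)
    have hbG : b ∈ tG := reach_subset_tG tG _ hb
    cases a with
    | sh =>
      obtain ⟨hz, -, -⟩ := ha
      by_cases hlen : 2 ≤ c.σ.length
      case neg =>
        refine Finset.mem_union_right _ ?_
        rw [reach, if_pos (by omega)]
        exact hbG
      case pos =>
        obtain ⟨m, i, j, hm⟩ := rep2 c.σ hlen
        have hsr := sorted_rep2 (hm ▸ hs)
        have hIc : topI c.σ = i := by rw [hm, topI_rep2]
        have hJc : topJ c.σ = j := by rw [hm, topJ_rep2]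
        have hσ' : (doAct c .sh).σ = (m ++ [i]) ++ [j, j + 1] := by
          simp only [doAct]
          rw [hm, topJ_rep2]; simp
        have hI' : topI (doAct c .sh).σ = j := by rw [hσ', topI_rep2]
        have hJ' : topJ (doAct c .sh).σ = j + 1 := by rw [hσ', topJ_rep2]
        refine Finset.mem_union_right _ ?_
        rw [reach_eq_of_len (by rw [hm, len_rep2]; omega)]
        rw [reach_eq_of_len (by rw [hσ', len_rep2]; omega)] at hb
        rcases Finset.mem_union.1 hb with hb | hb
        case inr =>
          rw [mem_rightSet] at hb
          refine Finset.mem_union_right _ (mem_rightSet.2 ⟨hbG, ?_⟩)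
          rw [hJ'] at hb; rw [hJc]; omega
        case inl =>
          obtain ⟨-, henc, hmem⟩ := mem_leftSet.1 hb
          rw [if_neg (by simp [doAct, Nat.even_add_one, hz]), hI', hJ'] at henc
          have hp1 : (span b).1 ≤ j := henc.1
          have hp3 : j + 1 ≤ (span b).2 := henc.2.2
          by_cases hpj : j ≤ (span b).1
          · exact Finset.mem_union_right _ (mem_rightSet.2 ⟨hbG, by rw [hJc]; omega⟩)
          · push_neg at hpj
            rw [hσ'] at hmem
            have hpσ : (span b).1 ∈ m ++ [i, j] := by
              rcases List.mem_append.1 hmem with hmm | hmm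
              · rcases List.mem_append.1 hmm with hmm | hmm
                · exact List.mem_append.2 (Or.inl hmm)
                · simp only [List.mem_singleton] at hmm
                  subst hmm; simp
              · simp only [List.mem_cons, List.mem_singleton, List.not_mem_nil, or_false] at hmm
                rcases hmm with hmm | hmm
                · rw [hmm]; simp
                · omega
            have hpi : (span b).1 ≤ i := by
              rcases List.mem_append.1 hpσ with hmm | hmm
              · exact le_of_lt (hsr.2 _ hmm)
              · simp only [List.mem_cons, List.mem_singleton, List.not_mem_nil, or_false] at hmm
                rcases hmm with hmm | hmm
                · omega
                · omega
            refine Finset.mem_union_left _ (mem_leftSet.2 ⟨hbG, ?_, hm ▸ hpσ⟩)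
            rw [if_pos hz, hIc, hJc]
            refine ⟨⟨hpi, hsr.1, by omega⟩, fun hcon => ?_⟩
            have : j = (span b).2 := congrArg Prod.snd hcon
            omega
    | comb =>
      obtain ⟨hz, hlen3⟩ := ha
      obtain ⟨m, x, i, j, hm⟩ := rep3 c.σ hlen3
      have hsr := sorted_rep3 (hm ▸ hs)
      have hIc : topI c.σ = i := by rw [hm, topI_rep3]
      have hJc : topJ c.σ = j := by rw [hm, topJ_rep3]
      have hσ' : (doAct c .comb).σ = m ++ [x, j] := by
        simp only [doAct]
        rw [hm, dropLast2_rep3, topJ_rep3]; simp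
      have hI' : topI (doAct c .comb).σ = x := by rw [hσ', topI_rep2]
      have hJ' : topJ (doAct c .comb).σ = j := by rw [hσ', topJ_rep2]
      refine Finset.mem_union_right _ ?_
      rw [reach_eq_of_len (by rw [hm]; simp)]
      rw [reach_eq_of_len (by rw [hσ', len_rep2]; omega)] at hb
      rcases Finset.mem_union.1 hb with hb | hb
      case inr =>
        rw [mem_rightSet] at hb
        refine Finset.mem_union_right _ (mem_rightSet.2 ⟨hbG, ?_⟩)
        rw [hJ'] at hb; rw [hJc]; exact hb.2
      case inl =>
        obtain ⟨-, henc, hmem⟩ := mem_leftSet.1 hb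
        rw [if_neg (by simp [doAct, Nat.even_add_one, hz]), hI', hJ'] at henc
        have hp1 : (span b).1 ≤ x := henc.1
        have hp3 : j ≤ (span b).2 := henc.2.2
        rw [hσ'] at hmem
        have hxj : x < j := lt_trans hsr.1 hsr.2.1
        have hpσ : (span b).1 ∈ m ++ [x, i, j] := by
          rcases List.mem_append.1 hmem with hmm | hmm
          · exact List.mem_append.2 (Or.inl hmm)
          · simp only [List.mem_cons, List.mem_singleton, List.not_mem_nil, or_false] at hmm
            rcases hmm with hmm | hmm
            · rw [hmm]; simp
            · omega
        refine Finset.mem_union_left _ (mem_leftSet.2 ⟨hbG, ?_, hm ▸ hpσ⟩)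
        rw [if_pos hz, hIc, hJc]
        refine ⟨⟨by omega, hsr.2.1, hp3⟩, fun hcon => ?_⟩
        have : i = (span b).1 := congrArg Prod.fst hcon
        omega
    | label X =>
      obtain ⟨hz, hlen⟩ := ha
      refine Finset.mem_union_right _ ?_
      rw [reach_eq_of_len hlen]
      rw [reach_eq_of_len (show 2 ≤ (doAct c (.label X)).σ.length from hlen)] at hb
      rcases Finset.mem_union.1 hb with hb | hb
      · obtain ⟨-, henc, hmem⟩ := mem_leftSet.1 hb
        rw [if_pos (by simpa [doAct, Nat.even_add_one] using hz)] at henc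
        refine Finset.mem_union_left _ (mem_leftSet.2 ⟨hbG, ?_, hmem⟩)
        rw [if_neg (by simpa using hz)]
        exact henc.1
      · rw [mem_rightSet] at hb
        exact Finset.mem_union_right _ (mem_rightSet.2 hb)
    | nolabel =>
      obtain ⟨hz, hlen, -⟩ := ha
      refine Finset.mem_union_right _ ?_
      rw [reach_eq_of_len hlen]
      rw [reach_eq_of_len (show 2 ≤ (doAct c .nolabel).σ.length from hlen)] at hb
      rcases Finset.mem_union.1 hb with hb | hb
      · obtain ⟨-, henc, hmem⟩ := mem_leftSet.1 hb
        rw [if_pos (by simpa [doAct, Nat.even_add_one] using hz)] at henc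
        refine Finset.mem_union_left _ (mem_leftSet.2 ⟨hbG, ?_, hmem⟩)
        rw [if_neg (by simpa using hz)]
        exact henc.1
      · rw [mem_rightSet] at hb
        exact Finset.mem_union_right _ (mem_rightSet.2 hb)

lemma goldPart_reaches {c c' : Config N} (h : Reaches n c c') (hc : Inv c) :
    goldPart tG c' ⊆ goldPart tG c := by
  induction h with
  | refl => exact Finset.Subset.refl _
  | tail hr hstep ih =>
    obtain ⟨a, ha, rfl⟩ := hstep
    exact (goldPart_step (inv_reaches hr hc) ha).trans ih

lemma precision_div_le {a u C v : ℕ} (hac : a ≤ C) (hvu : v ≤ u) :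
    (a : ℝ) / ((a : ℝ) + u) ≤ (C : ℝ) / ((C : ℝ) + v) := by
  rcases Nat.eq_zero_or_pos (C + v) with hCv | hCv
  · have hC : C = 0 := by omega
    have ha0 : a = 0 := by omega
    simp only [ha0, Nat.cast_zero, zero_add, zero_div]
    positivity
  rcases Nat.eq_zero_or_pos (a + u) with hau | hau
  · have ha0 : a = 0 := by omega
    simp only [ha0, Nat.cast_zero, zero_add, zero_div]
    positivity
  rw [div_le_div_iff₀ (by exact_mod_cast hau) (by exact_mod_cast hCv)]
  have h1 : (a : ℝ) ≤ C := by exact_mod_cast hac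
  have h2 : (v : ℝ) ≤ u := by exact_mod_cast hvu
  have h3 : (0:ℝ) ≤ a := by positivity
  nlinarith

end Aux
/-- Precision maximality of the optimal tree: for every valid `c` and every
`t' ∈ D(c)`, `p(t') ≤ p(t*(c))`, i.e.
`|t' ∩ t_G| / |t'| ≤ |t*(c) ∩ t_G| / |t*(c)|`. -/
theorem precision_maximal (n : ℕ) (hn : 1 ≤ n) (tG : Finset (N × ℕ × ℕ))
    (hG : IsGold n tG) (c : Config N) (hc : Valid n c)
    (t' : Finset (N × ℕ × ℕ)) (ht' : t' ∈ Dset n c) :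
    ((t' ∩ tG).card : ℝ) / (t'.card : ℝ) ≤
      ((tstar tG c ∩ tG).card : ℝ) / ((tstar tG c).card : ℝ) := by
  obtain ⟨c', hreach, hfin, rfl⟩ := ht'
  have hInv : Inv c := inv_valid hc
  -- c.t ⊆ c'.t
  have hmono : c.t ⊆ c'.t := t_mono hreach
  -- c'.t ∩ tG ⊆ tstar tG c ∩ tG
  have hgold : c'.t ∩ tG ⊆ tstar tG c ∩ tG := by
    intro b hb
    have h1 : b ∈ goldPart tG c' := Finset.mem_union_left _ hb
    have h2 : b ∈ goldPart tG c := goldPart_reaches hreach hInv h1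
    rcases Finset.mem_union.1 h2 with h | h
    · exact Finset.mem_inter.2 ⟨Finset.mem_union_left _ (Finset.mem_inter.1 h).1,
        (Finset.mem_inter.1 h).2⟩
    · exact Finset.mem_inter.2 ⟨Finset.mem_union_right _ h, reach_subset_tG tG c h⟩
  -- tstar tG c \ tG ⊆ c'.t \ tG
  have hsdiff : tstar tG c \ tG ⊆ c'.t \ tG := by
    intro b hb
    obtain ⟨hb1, hb2⟩ := Finset.mem_sdiff.1 hb
    rcases Finset.mem_union.1 hb1 with h | h
    · exact Finset.mem_sdiff.2 ⟨hmono h, hb2⟩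
    · exact absurd (reach_subset_tG tG c h) hb2
  have hA : (c'.t ∩ tG).card ≤ (tstar tG c ∩ tG).card := Finset.card_le_card hgold
  have hv : (tstar tG c \ tG).card ≤ (c'.t \ tG).card := Finset.card_le_card hsdiff
  have hcard1 : c'.t.card = (c'.t ∩ tG).card + (c'.t \ tG).card :=
    (Finset.card_inter_add_card_sdiff _ _).symm
  have hcard2 : (tstar tG c).card = (tstar tG c ∩ tG).card + (tstar tG c \ tG).card :=
    (Finset.card_inter_add_card_sdiff _ _).symm
  rw [hcard1, hcard2]
  push_cast
  exact precision_div_le hA hv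

end SpanParser
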